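/- arXiv:1903.02103 — 2 statements merged into one kernel-verified Lean document; each statement's English description precedes it below -/
import Mathlib

section
/- Let (β_n) be a sequence of positive reals with n β_n log log n → ∞ and n β_n → 0 as n → ∞, and for x ≥ 0 set φ_n(x) = x/√(2 log n) + √(2 log n) − ( n β_n log log n + log log n + log log log n )/√(2 log n). Then for all fixed 0 ≤ y < x < ∞, max_{1 ≤ i ≤ n} | Q( i β_n/2 , φ_n(x)²/2 ) − Q( i β_n/2 , φ_n(y)²/2 ) | → 0 as n → ∞, where Q(a,z) = (1/Γ(a)) ∫_z^∞ t^{a−1} e^{−t} dt. -/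
open Filter Real

/-- The regularized upper incomplete Gamma function
`Q(a,z) = (1/Γ(a)) ∫_z^∞ t^(a-1) e^(-t) dt`. -/
noncomputable def regIncGamma (a z : ℝ) : ℝ :=
  (1 / Real.Gamma a) * ∫ t in Set.Ioi z, t ^ (a - 1) * Real.exp (-t)

/-- A crude lower bound for `Γ(a+1)` when `a > 0`. -/
lemma gamma_add_one_lb {a : ℝ} (ha : 0 < a) :
    Real.exp (-2) ≤ Real.Gamma (a + 1) := by
  rw [Real.Gamma_eq_integral (by linarith : (0:ℝ) < a + 1)]
  have hint : MeasureTheory.IntegrableOn (fun x : ℝ => Real.exp (-x) * x ^ (a + 1 - 1))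
      (Set.Ioi 0) := Real.GammaIntegral_convergent (by linarith)
  calc Real.exp (-2)
      = ∫ _x in Set.Ioc (1:ℝ) 2, Real.exp (-2) := by
        rw [MeasureTheory.setIntegral_const]
        norm_num [Real.volume_Ioc]
    _ ≤ ∫ x in Set.Ioc (1:ℝ) 2, Real.exp (-x) * x ^ (a + 1 - 1) := by
        apply MeasureTheory.setIntegral_mono_on
        · exact MeasureTheory.integrableOn_const (by simp [Real.volume_Ioc])
        · exact hint.mono_set (fun t ht => lt_trans one_pos ht.1)
        · exact measurableSet_Ioc
        · intro t ht
          have h1 : (1:ℝ) ≤ t := ht.1.le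
          have h2 : (1:ℝ) ≤ t ^ (a + 1 - 1) := Real.one_le_rpow h1 (by linarith)
          calc Real.exp (-2) = Real.exp (-2) * 1 := (mul_one _).symm
            _ ≤ Real.exp (-t) * t ^ (a + 1 - 1) :=
                mul_le_mul (Real.exp_le_exp.2 (by linarith [ht.2])) h2 zero_le_one
                  (Real.exp_pos _).le
    _ ≤ ∫ x in Set.Ioi (0:ℝ), Real.exp (-x) * x ^ (a + 1 - 1) := by
        apply MeasureTheory.setIntegral_mono_set hint
        · filter_upwards [MeasureTheory.ae_restrict_mem measurableSet_Ioi] with t ht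
          have ht0 : (0:ℝ) < t := ht
          positivity
        · exact Filter.Eventually.of_forall (fun t ht => lt_trans one_pos ht.1)

/-- Bounds on the regularized upper incomplete Gamma function for small `a` and `z ≥ 1`. -/
lemma regIncGamma_bounds {a z : ℝ} (ha : 0 < a) (ha1 : a ≤ 1) (hz : 1 ≤ z) :
    0 ≤ regIncGamma a z ∧ regIncGamma a z ≤ a * Real.exp 2 := by
  have hΓ : 0 < Real.Gamma a := Real.Gamma_pos_of_pos ha
  have hfint : MeasureTheory.IntegrableOn (fun t : ℝ => t ^ (a - 1) * Real.exp (-t))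
      (Set.Ioi z) := by
    have h := (Real.GammaIntegral_convergent ha).mono_set
      (Set.Ioi_subset_Ioi (by linarith : (0:ℝ) ≤ z))
    exact h.congr_fun (fun t _ => mul_comm _ _) measurableSet_Ioi
  have hI0 : 0 ≤ ∫ t in Set.Ioi z, t ^ (a - 1) * Real.exp (-t) := by
    apply MeasureTheory.setIntegral_nonneg measurableSet_Ioi
    intro t ht
    have h0t : (0:ℝ) < t := lt_of_lt_of_le one_pos (le_trans hz ht.le)
    positivity
  have hI1 : (∫ t in Set.Ioi z, t ^ (a - 1) * Real.exp (-t)) ≤ 1 := by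
    have hexp : MeasureTheory.IntegrableOn (fun t : ℝ => Real.exp (-t)) (Set.Ioi z) := by
      have h := exp_neg_integrableOn_Ioi z (b := 1) one_pos
      simpa using h
    calc (∫ t in Set.Ioi z, t ^ (a - 1) * Real.exp (-t))
        ≤ ∫ t in Set.Ioi z, Real.exp (-t) := by
          apply MeasureTheory.setIntegral_mono_on hfint hexp measurableSet_Ioi
          intro t ht
          have ht1 : (1:ℝ) ≤ t := le_trans hz ht.le
          have hle : t ^ (a - 1) ≤ 1 :=
            Real.rpow_le_one_of_one_le_of_nonpos ht1 (by linarith)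
          calc t ^ (a - 1) * Real.exp (-t) ≤ 1 * Real.exp (-t) :=
                mul_le_mul_of_nonneg_right hle (Real.exp_pos _).le
            _ = Real.exp (-t) := one_mul _
      _ = Real.exp (-z) := integral_exp_neg_Ioi z
      _ ≤ 1 := by
          rw [show (1:ℝ) = Real.exp 0 from (Real.exp_zero).symm]
          exact Real.exp_le_exp.2 (by linarith)
  constructor
  · exact mul_nonneg (by positivity) hI0
  · have h1 : regIncGamma a z ≤ 1 / Real.Gamma a := by
      unfold regIncGamma
      calc (1 / Real.Gamma a) * ∫ t in Set.Ioi z, t ^ (a - 1) * Real.exp (-t)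
          ≤ (1 / Real.Gamma a) * 1 := mul_le_mul_of_nonneg_left hI1 (by positivity)
        _ = 1 / Real.Gamma a := mul_one _
    refine h1.trans ?_
    have hΓ1 : Real.exp (-2) ≤ Real.Gamma (a + 1) := gamma_add_one_lb ha
    have hGa : Real.Gamma (a + 1) = a * Real.Gamma a := Real.Gamma_add_one ha.ne'
    have hkey : Real.exp 2 * Real.exp (-2) = 1 := by
      rw [← Real.exp_add]; norm_num
    rw [div_le_iff₀ hΓ]
    have h2 : Real.exp (-2) ≤ a * Real.Gamma a := hGa ▸ hΓ1
    nlinarith [Real.exp_pos 2, (Real.exp_pos (-2)).le]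

/-- **Uniform negligibility in the regime `1/(n log log n) ≪ β ≪ 1/n`:**
`max_{1 ≤ i ≤ n} |Q(iβ_n/2, φ_n(x)²/2) − Q(iβ_n/2, φ_n(y)²/2)| → 0`. -/
theorem uniform_negligibility_second_regime (β : ℕ → ℝ) (hβpos : ∀ n, 0 < β n)
    (hβ1 : Tendsto (fun n : ℕ => (n : ℝ) * β n * Real.log (Real.log n)) atTop atTop)
    (hβ2 : Tendsto (fun n : ℕ => (n : ℝ) * β n) atTop (nhds 0))
    (φ : ℕ → ℝ → ℝ)
    (hφ : ∀ n : ℕ, ∀ x : ℝ, 0 ≤ x →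
      φ n x = x / Real.sqrt (2 * Real.log n) + Real.sqrt (2 * Real.log n)
        - ((n : ℝ) * β n * Real.log (Real.log n) + Real.log (Real.log n)
            + Real.log (Real.log (Real.log n))) / Real.sqrt (2 * Real.log n))
    (x y : ℝ) (hy : 0 ≤ y) (hxy : y < x) :
    Tendsto (fun n : ℕ =>
        ⨆ i ∈ Finset.Icc 1 n,
          |regIncGamma ((i : ℝ) * β n / 2) (φ n x ^ 2 / 2)
            - regIncGamma ((i : ℝ) * β n / 2) (φ n y ^ 2 / 2)|)
      atTop (nhds 0) := by
  have hx0 : 0 ≤ x := le_of_lt (lt_of_le_of_lt hy hxy)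
  have hlog : Tendsto (fun n : ℕ => Real.log n) atTop atTop :=
    Real.tendsto_log_atTop.comp tendsto_natCast_atTop_atTop
  have hE : ∀ᶠ n : ℕ in atTop, 25 ≤ Real.log n ∧ (n : ℝ) * β n ≤ 1 := by
    filter_upwards [hlog.eventually_ge_atTop 25,
      hβ2.eventually_lt_const (by norm_num : (0:ℝ) < 1)] with n h1 h2
    exact ⟨h1, h2.le⟩
  apply squeeze_zero'
      (g := fun n : ℕ => Real.exp 2 * ((n : ℝ) * β n))
  · exact Filter.Eventually.of_forall fun n =>
      Real.iSup_nonneg fun i => Real.iSup_nonneg fun _ => abs_nonneg _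
  · filter_upwards [hE] with n ⟨hu, hnβ⟩
    have hnβ0 : 0 ≤ (n : ℝ) * β n :=
      mul_nonneg (Nat.cast_nonneg n) (hβpos n).le
    have hc : 0 ≤ Real.exp 2 * ((n : ℝ) * β n) := mul_nonneg (Real.exp_pos 2).le hnβ0
    -- notation
    set u : ℝ := Real.log n with hudef
    have hu0 : (0:ℝ) < u := by linarith
    set s : ℝ := Real.sqrt (2 * u) with hsdef
    have hs0 : 0 < s := Real.sqrt_pos.2 (by linarith)
    have hs7 : 7 ≤ s := by
      have h49 : (49:ℝ) ≤ 2 * u := by linarith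
      have := Real.sqrt_le_sqrt h49
      rwa [show (49:ℝ) = 7 ^ 2 by norm_num, Real.sqrt_sq (by norm_num : (0:ℝ) ≤ 7)] at this
    have hL0 : 0 ≤ Real.log u := Real.log_nonneg (by linarith)
    -- the key bound on the correction term
    have hsqu : 0 < Real.sqrt u := Real.sqrt_pos.2 hu0
    have hlog2 : Real.log u ≤ 2 * Real.sqrt u := by
      have h1 : Real.log (Real.sqrt u) ≤ Real.sqrt u - 1 :=
        Real.log_le_sub_one_of_pos hsqu
      rw [Real.log_sqrt hu0.le] at h1
      linarith
    have hsplit : s = Real.sqrt 2 * Real.sqrt u := Real.sqrt_mul (by norm_num) u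
    have hsqrt2 : (1.2:ℝ) ≤ Real.sqrt 2 := by
      nlinarith [Real.sq_sqrt (by norm_num : (0:ℝ) ≤ 2), Real.sqrt_nonneg 2]
    have h3L : 3 * Real.log u ≤ 5 * s := by
      rw [hsplit]
      nlinarith
    set N : ℝ := (n : ℝ) * β n * Real.log u + Real.log u + Real.log (Real.log u) with hNdef
    have hN : N ≤ 3 * Real.log u := by
      have h1 : (n : ℝ) * β n * Real.log u ≤ 1 * Real.log u :=
        mul_le_mul_of_nonneg_right hnβ hL0
      have h2 : Real.log (Real.log u) ≤ Real.log u := Real.log_le_self hL0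
      simp only [hNdef]; linarith
    have hNs : N / s ≤ 5 := by
      rw [div_le_iff₀ hs0]; nlinarith
    -- φ n w is large for w ≥ 0
    have hφbig : ∀ w : ℝ, 0 ≤ w → 1 ≤ φ n w ^ 2 / 2 := by
      intro w hw
      have hφval : φ n w = w / s + s - N / s := hφ n w hw
      have hws : 0 ≤ w / s := div_nonneg hw hs0.le
      have h2 : 2 ≤ φ n w := by rw [hφval]; linarith
      nlinarith
    -- bound each term of the sup
    have hbound : ∀ i : ℕ, i ∈ Finset.Icc 1 n →
        |regIncGamma ((i : ℝ) * β n / 2) (φ n x ^ 2 / 2)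
          - regIncGamma ((i : ℝ) * β n / 2) (φ n y ^ 2 / 2)|
          ≤ Real.exp 2 * ((n : ℝ) * β n) := by
      intro i hi
      rw [Finset.mem_Icc] at hi
      have hi1 : (1:ℝ) ≤ (i:ℝ) := by exact_mod_cast hi.1
      have hin : (i:ℝ) ≤ (n:ℝ) := by exact_mod_cast hi.2
      set a : ℝ := (i : ℝ) * β n / 2 with hadef
      have ha : 0 < a := by
        have := hβpos n
        simp only [hadef]; positivity
      have hiβ : (i:ℝ) * β n ≤ (n:ℝ) * β n :=
        mul_le_mul_of_nonneg_right hin (hβpos n).le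
      have ha1 : a ≤ 1 := by simp only [hadef]; linarith
      obtain ⟨hpx0, hpx1⟩ := regIncGamma_bounds ha ha1 (hφbig x hx0)
      obtain ⟨hpy0, hpy1⟩ := regIncGamma_bounds ha ha1 (hφbig y hy)
      have hae : a * Real.exp 2 ≤ Real.exp 2 * ((n:ℝ) * β n) := by
        have : a ≤ (n:ℝ) * β n := by simp only [hadef]; linarith
        nlinarith [Real.exp_pos 2]
      rw [abs_sub_le_iff]
      constructor <;> linarith
    exact Real.iSup_le (fun i => Real.iSup_le (fun hi => hbound i hi) hc) hc
  · have := hβ2.const_mul (Real.exp 2)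
    simpa using this
end

section
/- Let γ ∈ (0,1), and for x ≥ 0 set a_n = √(2 log(n/(γ log log n))) and φ_n(x) = x/a_n + a_n + [ (γ/2 − 1) log log(n/(γ log log n)) − log(2^{−γ/2} Γ(γ)) ] / a_n. Then for all fixed 0 ≤ x < y < ∞, max_{1 ≤ i ≤ n} ( Q( γ i/n , φ_n(x)²/2 ) − Q( γ i/n , φ_n(y)²/2 ) ) → 0 as n → ∞, where Q(a,z) = (1/Γ(a)) ∫_z^∞ t^{a−1} e^{−t} dt. -/
open Filter Real

private lemma integrableOn_aux {a z : ℝ} (ha : 0 < a) (hz : 0 ≤ z) :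
    MeasureTheory.IntegrableOn (fun t : ℝ => t ^ (a - 1) * Real.exp (-t)) (Set.Ioi z) := by
  have h := (Real.GammaIntegral_convergent ha).mono_set (Set.Ioi_subset_Ioi hz)
  exact h.congr_fun (fun t ht => by ring) measurableSet_Ioi

private lemma regIncGamma_sub {a z w : ℝ} (ha : 0 < a) (hz : 0 < z) (hzw : z ≤ w) :
    regIncGamma a z - regIncGamma a w
      = (1 / Real.Gamma a) * ∫ t in Set.Ioc z w, t ^ (a - 1) * Real.exp (-t) := by
  unfold regIncGamma
  rw [← mul_sub]
  congr 1
  have h1 : MeasureTheory.IntegrableOn (fun t : ℝ => t ^ (a - 1) * Real.exp (-t))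
      (Set.Ioc z w) := (integrableOn_aux ha hz.le).mono_set Set.Ioc_subset_Ioi_self
  have h2 : MeasureTheory.IntegrableOn (fun t : ℝ => t ^ (a - 1) * Real.exp (-t))
      (Set.Ioi w) := integrableOn_aux ha (hz.le.trans hzw)
  have h3 := MeasureTheory.setIntegral_union (Set.Ioc_disjoint_Ioi le_rfl)
    measurableSet_Ioi h1 h2
  rw [Set.Ioc_union_Ioi_eq_Ioi hzw] at h3
  rw [h3]; ring

private lemma tendsto_sqrt_atTop' : Tendsto Real.sqrt atTop atTop := by
  apply (tendsto_rpow_atTop (by norm_num : (0:ℝ) < 1/2)).congr'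
  filter_upwards [eventually_ge_atTop (0:ℝ)] with u hu
  exact (Real.sqrt_eq_rpow u).symm

private lemma tendsto_sqrt_two_mul_atTop :
    Tendsto (fun u : ℝ => Real.sqrt (2 * u)) atTop atTop :=
  tendsto_sqrt_atTop'.comp (tendsto_id.const_mul_atTop two_pos)

private lemma outer_tendsto (c K : ℝ) :
    Tendsto (fun u : ℝ => (c * Real.log u - K) / Real.sqrt (2 * u)) atTop (nhds 0) := by
  have h1 : Real.log =o[atTop] fun u : ℝ => u ^ (1/2 : ℝ) :=
    isLittleO_log_rpow_atTop (by norm_num)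
  have h2 : (fun u : ℝ => u ^ (1/2:ℝ)) =O[atTop] fun u => Real.sqrt (2*u) := by
    apply Asymptotics.IsBigO.of_bound 1
    filter_upwards [eventually_ge_atTop (0:ℝ)] with u hu
    rw [one_mul, Real.norm_eq_abs, Real.norm_eq_abs,
      abs_of_nonneg (Real.rpow_nonneg hu _), abs_of_nonneg (Real.sqrt_nonneg _),
      ← Real.sqrt_eq_rpow]
    exact Real.sqrt_le_sqrt (by linarith)
  have h3 : (fun u : ℝ => c * Real.log u) =o[atTop] fun u => Real.sqrt (2*u) :=
    (h1.trans_isBigO h2).const_mul_left c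
  have h4 : (fun _ : ℝ => K) =o[atTop] fun u => Real.sqrt (2*u) := by
    rw [Asymptotics.isLittleO_const_left]
    right
    exact tendsto_norm_atTop_atTop.comp tendsto_sqrt_two_mul_atTop
  exact (h3.sub h4).tendsto_div_nhds_zero

private lemma Gamma_inv_bound {γ : ℝ} (hγ0 : 0 < γ) (hγ1 : γ < 1) :
    ∃ C : ℝ, 0 < C ∧ ∀ b : ℝ, 0 < b → b ≤ γ → 1 / Real.Gamma b ≤ C := by
  have hcont : ContinuousOn Real.Gamma (Set.Icc (1:ℝ) 2) := by
    intro s hs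
    have hne : ∀ m : ℕ, s ≠ -(m:ℝ) := by
      intro m h
      have h1 : (1:ℝ) ≤ s := hs.1
      have h2 : (0:ℝ) ≤ (m:ℝ) := Nat.cast_nonneg m
      linarith [h ▸ h1]
    exact (Real.differentiableAt_Gamma hne).continuousAt.continuousWithinAt
  obtain ⟨u, hu_mem, hu⟩ := isCompact_Icc.exists_isMinOn (Set.nonempty_Icc.mpr one_le_two) hcont
  have hm0 : 0 < Real.Gamma u := Real.Gamma_pos_of_pos (by linarith [hu_mem.1])
  refine ⟨γ / Real.Gamma u, by positivity, fun b hb hbγ => ?_⟩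
  have h1 : Real.Gamma (b+1) = b * Real.Gamma b := Real.Gamma_add_one hb.ne'
  have h2 : Real.Gamma u ≤ Real.Gamma (b+1) := hu ⟨by linarith, by linarith⟩
  have hΓb : 0 < Real.Gamma b := Real.Gamma_pos_of_pos hb
  rw [div_le_div_iff₀ hΓb hm0]
  nlinarith

set_option maxHeartbeats 1600000 in
/-- **Uniform negligibility in the intermediate regime `nβ = 2γ`:**
`max_{1 ≤ i ≤ n} (Q(γi/n, φ_n(x)²/2) − Q(γi/n, φ_n(y)²/2)) → 0`. -/
theorem uniform_negligibility_gamma_regime (γ : ℝ) (hγ : γ ∈ Set.Ioo (0 : ℝ) 1)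
    (a : ℕ → ℝ)
    (ha : ∀ n : ℕ, a n = Real.sqrt (2 * Real.log ((n : ℝ) / (γ * Real.log (Real.log n)))))
    (φ : ℕ → ℝ → ℝ)
    (hφ : ∀ n : ℕ, ∀ x : ℝ, 0 ≤ x →
      φ n x = x / a n + a n
        + ((γ / 2 - 1) * Real.log (Real.log ((n : ℝ) / (γ * Real.log (Real.log n))))
            - Real.log ((2 : ℝ) ^ (-(γ / 2)) * Real.Gamma γ)) / a n)
    (x y : ℝ) (hx : 0 ≤ x) (hxy : x < y) :
    Tendsto (fun n : ℕ =>
        ⨆ i ∈ Finset.Icc 1 n,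
          (regIncGamma (γ * (i : ℝ) / n) (φ n x ^ 2 / 2)
            - regIncGamma (γ * (i : ℝ) / n) (φ n y ^ 2 / 2)))
      atTop (nhds 0) := by
  obtain ⟨hγ0, hγ1⟩ := hγ
  obtain ⟨C0, hC0, hΓ⟩ := Gamma_inv_bound hγ0 hγ1
  set L : ℕ → ℝ := fun n => Real.log ((n : ℝ) / (γ * Real.log (Real.log n))) with hL_def
  set K : ℝ := Real.log ((2:ℝ) ^ (-(γ/2)) * Real.Gamma γ) with hK_def
  set c : ℕ → ℝ := fun n => (γ/2 - 1) * Real.log (L n) - K with hc_def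
  have hφx : ∀ n, φ n x = x / a n + a n + c n / a n := fun n => hφ n x hx
  have hφy : ∀ n, φ n y = y / a n + a n + c n / a n := fun n => hφ n y (hx.trans hxy.le)
  -- `L n → ∞`
  have hl : Tendsto (fun n : ℕ => Real.log (Real.log n)) atTop atTop :=
    Real.tendsto_log_atTop.comp (Real.tendsto_log_atTop.comp tendsto_natCast_atTop_atTop)
  have hquot : Tendsto (fun n : ℕ => (n:ℝ) / (γ * Real.log (Real.log n))) atTop atTop := by
    have hbig : Tendsto (fun n : ℕ => Real.sqrt n / (2 * γ)) atTop atTop :=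
      (tendsto_sqrt_atTop'.comp tendsto_natCast_atTop_atTop).atTop_div_const (by positivity)
    apply tendsto_atTop_mono' _ _ hbig
    filter_upwards [hl.eventually_ge_atTop 1,
      (Real.tendsto_log_atTop.comp tendsto_natCast_atTop_atTop).eventually_ge_atTop 1,
      tendsto_natCast_atTop_atTop.eventually_ge_atTop (1:ℝ)] with n h1 h2 h3
    simp only [Function.comp_apply] at h2
    have hs : 0 < Real.sqrt (n:ℝ) := Real.sqrt_pos.mpr (by linarith)
    have hmul : Real.sqrt (n:ℝ) * Real.sqrt (n:ℝ) = (n:ℝ) :=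
      Real.mul_self_sqrt (by linarith)
    have hlogn : Real.log (n:ℝ) = 2 * Real.log (Real.sqrt (n:ℝ)) := by
      conv_lhs => rw [← hmul]
      rw [Real.log_mul hs.ne' hs.ne']; ring
    have h4 := Real.log_le_sub_one_of_pos hs
    have hlog_le : Real.log (n:ℝ) ≤ 2 * Real.sqrt (n:ℝ) := by rw [hlogn]; linarith
    have h5 := Real.log_le_sub_one_of_pos (show (0:ℝ) < Real.log n by linarith)
    have hln : Real.log (Real.log (n:ℝ)) ≤ 2 * Real.sqrt (n:ℝ) := by linarith
    have hl0 : (0:ℝ) < Real.log (Real.log (n:ℝ)) := by linarith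
    rw [div_le_div_iff₀ (by positivity) (by positivity)]
    nlinarith [mul_le_mul_of_nonneg_left hln (mul_nonneg hγ0.le hs.le), hmul, hs.le, hγ0.le]
  have hL : Tendsto L atTop atTop := Real.tendsto_log_atTop.comp hquot
  have hA : Tendsto a atTop atTop := by
    have : a = fun n => Real.sqrt (2 * L n) := funext ha
    rw [this]
    exact tendsto_sqrt_two_mul_atTop.comp hL
  have hca : Tendsto (fun n => c n / a n) atTop (nhds 0) := by
    have h := (outer_tendsto (γ/2-1) K).comp hL
    apply h.congr
    intro n
    simp only [Function.comp_apply, hc_def]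
    rw [ha n]
  have h1a : Tendsto (fun n => 1 / a n) atTop (nhds 0) := tendsto_const_nhds.div_atTop hA
  have hxa : Tendsto (fun n => x / a n) atTop (nhds 0) := tendsto_const_nhds.div_atTop hA
  have hphix : Tendsto (fun n => φ n x) atTop atTop := by
    have h := hA.atTop_add (hxa.add hca)
    apply h.congr
    intro n
    rw [hφx n]; ring
  have hzx : Tendsto (fun n => φ n x ^ 2 / 2) atTop atTop :=
    ((tendsto_pow_atTop two_ne_zero).atTop_div_const two_pos).comp hphix
  have hd : Tendsto (fun n => φ n y ^ 2 / 2 - φ n x ^ 2 / 2) atTop (nhds (y - x)) := by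
    have hident : ∀ᶠ n in atTop, φ n y ^ 2 / 2 - φ n x ^ 2 / 2
        = (y^2 - x^2)/2 * (1/a n) * (1/a n)
          + ((y - x) + (y - x) * ((c n / a n) * (1/a n))) := by
      filter_upwards [hA.eventually_ge_atTop 1] with n hn
      have ha0 : a n ≠ 0 := by intro h; rw [h] at hn; linarith
      rw [hφx n, hφy n]
      field_simp
      ring
    have hlim : Tendsto (fun n => (y^2 - x^2)/2 * (1/a n) * (1/a n)
        + ((y - x) + (y - x) * ((c n / a n) * (1/a n)))) atTop
        (nhds (((y^2-x^2)/2 * 0) * 0 + ((y - x) + (y - x) * ((0:ℝ)*0)))) :=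
      ((tendsto_const_nhds.mul h1a).mul h1a).add
        (tendsto_const_nhds.add (tendsto_const_nhds.mul (hca.mul h1a)))
    have hval : ((y^2-x^2)/2 * 0) * 0 + ((y - x) + (y - x) * ((0:ℝ) * 0)) = y - x := by ring
    rw [hval] at hlim
    exact hlim.congr' (hident.mono fun n h => h.symm)
  have hrp : Tendsto (fun n => (φ n x ^ 2 / 2) ^ (γ - 1)) atTop (nhds 0) := by
    have h := (tendsto_rpow_neg_atTop (by linarith : (0:ℝ) < 1 - γ)).comp hzx
    have e : -(1 - γ) = γ - 1 := by ring
    rw [e] at h; exact h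
  have hex : Tendsto (fun n => Real.exp (-(φ n x ^ 2 / 2))) atTop (nhds 0) :=
    Real.tendsto_exp_neg_atTop_nhds_zero.comp hzx
  have hM : Tendsto (fun n => C0 * ((φ n y ^ 2 / 2 - φ n x ^ 2 / 2)
      * ((φ n x ^ 2 / 2) ^ (γ - 1) * Real.exp (-(φ n x ^ 2 / 2))))) atTop (nhds 0) := by
    have h := (tendsto_const_nhds (x := C0) (f := atTop)).mul (hd.mul (hrp.mul hex))
    simpa using h
  apply squeeze_zero' _ _ hM
  · -- eventually nonneg
    filter_upwards [hzx.eventually_ge_atTop 1,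
      hd.eventually (eventually_gt_nhds (by linarith : (0:ℝ) < y - x))] with n h1 h2
    apply Real.iSup_nonneg; intro i
    apply Real.iSup_nonneg; intro hi
    obtain ⟨hi1, hin⟩ := Finset.mem_Icc.mp hi
    have hi1' : (1:ℝ) ≤ (i:ℝ) := by exact_mod_cast hi1
    have hn1 : (1:ℝ) ≤ (n:ℝ) := by exact_mod_cast le_trans hi1 hin
    have hai0 : 0 < γ * i / n := div_pos (mul_pos hγ0 (by linarith)) (by linarith)
    have hzxzy : φ n x ^ 2 / 2 ≤ φ n y ^ 2 / 2 := by linarith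
    rw [regIncGamma_sub hai0 (by linarith) hzxzy]
    have hΓpos : 0 < Real.Gamma (γ * i / n) := Real.Gamma_pos_of_pos hai0
    apply mul_nonneg (le_of_lt (div_pos one_pos hΓpos))
    apply MeasureTheory.setIntegral_nonneg measurableSet_Ioc
    intro t ht
    have ht0 : (0:ℝ) < t := lt_trans (by linarith) ht.1
    positivity
  · -- eventually bounded by M
    filter_upwards [hzx.eventually_ge_atTop 1,
      hd.eventually (eventually_gt_nhds (by linarith : (0:ℝ) < y - x))] with n h1 h2
    have hzx0 : (0:ℝ) < φ n x ^ 2 / 2 := by linarith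
    have hzxzy : φ n x ^ 2 / 2 ≤ φ n y ^ 2 / 2 := by linarith
    have hB0 : (0:ℝ) ≤ (φ n x ^ 2 / 2) ^ (γ - 1) * Real.exp (-(φ n x ^ 2 / 2)) := by positivity
    have hMn0 : (0:ℝ) ≤ C0 * ((φ n y ^ 2 / 2 - φ n x ^ 2 / 2)
        * ((φ n x ^ 2 / 2) ^ (γ - 1) * Real.exp (-(φ n x ^ 2 / 2)))) :=
      mul_nonneg hC0.le (mul_nonneg (by linarith) hB0)
    refine Real.iSup_le (fun i => ?_) hMn0
    refine Real.iSup_le (fun hi => ?_) hMn0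
    obtain ⟨hi1, hin⟩ := Finset.mem_Icc.mp hi
    have hi1' : (1:ℝ) ≤ (i:ℝ) := by exact_mod_cast hi1
    have hin' : (i:ℝ) ≤ (n:ℝ) := by exact_mod_cast hin
    have hn1 : (1:ℝ) ≤ (n:ℝ) := by exact_mod_cast le_trans hi1 hin
    have hai0 : 0 < γ * i / n := div_pos (mul_pos hγ0 (by linarith)) (by linarith)
    have haiγ : γ * i / n ≤ γ := by
      rw [div_le_iff₀ (by linarith : (0:ℝ) < (n:ℝ))]
      nlinarith
    rw [regIncGamma_sub hai0 hzx0 hzxzy]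
    have hΓpos : 0 < Real.Gamma (γ * i / n) := Real.Gamma_pos_of_pos hai0
    have hintnn : 0 ≤ ∫ t in Set.Ioc (φ n x ^ 2 / 2) (φ n y ^ 2 / 2),
        t ^ (γ * i / n - 1) * Real.exp (-t) := by
      apply MeasureTheory.setIntegral_nonneg measurableSet_Ioc
      intro t ht
      have ht0 : (0:ℝ) < t := lt_trans hzx0 ht.1
      positivity
    have hint : ∫ t in Set.Ioc (φ n x ^ 2 / 2) (φ n y ^ 2 / 2),
        t ^ (γ * i / n - 1) * Real.exp (-t)
        ≤ ((φ n x ^ 2 / 2) ^ (γ - 1) * Real.exp (-(φ n x ^ 2 / 2)))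
          * (φ n y ^ 2 / 2 - φ n x ^ 2 / 2) := by
      have hmeas : MeasureTheory.AEStronglyMeasurable
          (fun t : ℝ => t ^ (γ * i / n - 1) * Real.exp (-t))
          (MeasureTheory.volume.restrict (Set.Ioc (φ n x ^ 2 / 2) (φ n y ^ 2 / 2))) :=
        ((integrableOn_aux hai0 hzx0.le).mono_set Set.Ioc_subset_Ioi_self).aestronglyMeasurable
      have hpt : ∀ t ∈ Set.Ioc (φ n x ^ 2 / 2) (φ n y ^ 2 / 2),
          ‖t ^ (γ * i / n - 1) * Real.exp (-t)‖
            ≤ (φ n x ^ 2 / 2) ^ (γ - 1) * Real.exp (-(φ n x ^ 2 / 2)) := by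
        intro t ht
        have ht0 : (0:ℝ) < t := lt_trans hzx0 ht.1
        rw [Real.norm_eq_abs, abs_of_nonneg (by positivity)]
        have e1 : t ^ (γ * i / n - 1) ≤ (φ n x ^ 2 / 2) ^ (γ * i / n - 1) :=
          Real.rpow_le_rpow_of_nonpos hzx0 ht.1.le (by linarith)
        have e2 : (φ n x ^ 2 / 2) ^ (γ * i / n - 1) ≤ (φ n x ^ 2 / 2) ^ (γ - 1) :=
          Real.rpow_le_rpow_of_exponent_le h1 (by linarith)
        have e3 : Real.exp (-t) ≤ Real.exp (-(φ n x ^ 2 / 2)) :=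
          Real.exp_le_exp.mpr (by linarith [ht.1])
        exact mul_le_mul (e1.trans e2) e3 (Real.exp_pos _).le
          (Real.rpow_nonneg hzx0.le _)
      have hnorm := MeasureTheory.norm_setIntegral_le_of_norm_le_const
        (μ := MeasureTheory.volume) (measure_Ioc_lt_top) hpt
      rw [Real.volume_real_Ioc, max_eq_left (by linarith)] at hnorm
      exact le_trans (le_abs_self _) hnorm
    calc (1 / Real.Gamma (γ * i / n)) * ∫ t in Set.Ioc (φ n x ^ 2 / 2) (φ n y ^ 2 / 2),
          t ^ (γ * i / n - 1) * Real.exp (-t)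
        ≤ C0 * (((φ n x ^ 2 / 2) ^ (γ - 1) * Real.exp (-(φ n x ^ 2 / 2)))
            * (φ n y ^ 2 / 2 - φ n x ^ 2 / 2)) :=
          mul_le_mul (hΓ _ hai0 haiγ) hint hintnn hC0.le
      _ = C0 * ((φ n y ^ 2 / 2 - φ n x ^ 2 / 2)
            * ((φ n x ^ 2 / 2) ^ (γ - 1) * Real.exp (-(φ n x ^ 2 / 2)))) := by ring
end
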